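/- Let F: ℝ^p → ℝ be L-Lipschitz-smooth (gradient L-Lipschitz) and bounded below. Consider iterates Θ^{t+1} = Θ^t - β_t((1-η)∇F(Θ^t) + ξ^t), where 0 ≤ η < 1, E[ξ^t | Θ^t] = 0, E[‖ξ^t‖² | Θ^t] ≤ σ̂², and β_t = β is constant with β ≤ 1/L and 2(1-η)β - (1-η)²Lβ² ≥ (1-η)β. Then min_{1 ≤ t ≤ T} E[‖∇F(Θ^t)‖²] ≤ (2(F(Θ^1) - inf F) + TLσ̂²β²) / ((1-η)βT). -/

import Mathlib

open MeasureTheory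
open scoped RealInnerProductSpace

private lemma descent_lemma {p : ℕ} (F : EuclideanSpace ℝ (Fin p) → ℝ) (L : ℝ)
    (hdiff : Differentiable ℝ F)
    (hlip : ∀ u v, ‖gradient F u - gradient F v‖ ≤ L * ‖u - v‖)
    (x y : EuclideanSpace ℝ (Fin p)) :
    F y ≤ F x + ⟪gradient F x, y - x⟫ + L / 2 * ‖y - x‖ ^ 2 := by
  set v := y - x with hv
  have hder : ∀ s : ℝ, HasDerivAt (fun s : ℝ => F (x + s • v))
      ⟪gradient F (x + s • v), v⟫ s := by
    intro s
    have hc : HasDerivAt (fun s : ℝ => x + s • v) v s := by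
      simpa using ((hasDerivAt_id s).smul_const v).const_add x
    have hF := ((hdiff (x + s • v)).hasGradientAt).hasFDerivAt
    have := hF.comp_hasDerivAt s hc
    exact this
  set φ : ℝ → ℝ := fun s => F (x + s • v) - s * ⟪gradient F x, v⟫ - L * s ^ 2 / 2 * ‖v‖ ^ 2
    with hφ
  have hφder : ∀ s : ℝ, HasDerivAt φ
      (⟪gradient F (x + s • v), v⟫ - ⟪gradient F x, v⟫ - L * s * ‖v‖ ^ 2) s := by
    intro s
    have h1 : HasDerivAt (fun s : ℝ => s * ⟪gradient F x, v⟫) ⟪gradient F x, v⟫ s := by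
      simpa using (hasDerivAt_id s).mul_const _
    have h2 : HasDerivAt (fun s : ℝ => L * s ^ 2 / 2 * ‖v‖ ^ 2) (L * s * ‖v‖ ^ 2) s := by
      have : HasDerivAt (fun s : ℝ => s ^ 2) (2 * s) s := by
        simpa using hasDerivAt_pow 2 s
      have := ((this.const_mul L).div_const 2).mul_const (‖v‖ ^ 2)
      exact this.congr_deriv (by ring)
    exact ((hder s).sub h1).sub h2
  have hanti : AntitoneOn φ (Set.Icc 0 1) := by
    apply antitoneOn_of_deriv_nonpos (convex_Icc 0 1)
    · exact (Differentiable.continuous fun s => (hφder s).differentiableAt).continuousOn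
    · intro s hs
      exact (hφder s).differentiableAt.differentiableWithinAt
    · intro s hs
      rw [interior_Icc] at hs
      rw [(hφder s).deriv]
      have h1 : ⟪gradient F (x + s • v) - gradient F x, v⟫ ≤ L * s * ‖v‖ ^ 2 := by
        calc ⟪gradient F (x + s • v) - gradient F x, v⟫
            ≤ ‖gradient F (x + s • v) - gradient F x‖ * ‖v‖ := real_inner_le_norm _ _
          _ ≤ (L * ‖(x + s • v) - x‖) * ‖v‖ := by
              have := hlip (x + s • v) x
              exact mul_le_mul_of_nonneg_right this (norm_nonneg _)
          _ = L * s * ‖v‖ ^ 2 := by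
              rw [add_sub_cancel_left, norm_smul, Real.norm_eq_abs,
                abs_of_nonneg hs.1.le]
              ring
      rw [inner_sub_left] at h1
      linarith
  have h01 := hanti (Set.left_mem_Icc.2 one_pos.le) (Set.right_mem_Icc.2 one_pos.le)
    zero_le_one
  simp only [hφ] at h01
  have e0 : x + (0:ℝ) • v = x := by simp
  have e1 : x + (1:ℝ) • v = y := by simp [hv]
  rw [e0, e1] at h01
  simp only [zero_pow, mul_zero, zero_mul, sub_zero, one_mul, one_pow, mul_one] at h01
  nlinarith [h01]

private lemma expand_aux {p : ℕ} (b e L : ℝ) (gx ξv : EuclideanSpace ℝ (Fin p)) :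
    ⟪gx, -(b • (e • gx + ξv))⟫ + L / 2 * ‖-(b • (e • gx + ξv))‖ ^ 2
      = -(e * b - L * b ^ 2 * e ^ 2 / 2) * ‖gx‖ ^ 2
        + (L * b ^ 2 * e - b) * ⟪gx, ξv⟫ + L * b ^ 2 / 2 * ‖ξv‖ ^ 2 := by
  rw [norm_neg, inner_neg_right, norm_smul, real_inner_smul_right, inner_add_right,
    real_inner_smul_right, mul_pow, norm_add_sq_real, norm_smul,
    real_inner_smul_left, real_inner_self_eq_norm_sq, mul_pow, Real.norm_eq_abs, sq_abs,
    Real.norm_eq_abs, sq_abs]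
  ring

private lemma coord_abs_le_norm {p : ℕ} (x : EuclideanSpace ℝ (Fin p)) (i : Fin p) :
    |x i| ≤ ‖x‖ := by
  calc |x i| = Real.sqrt (‖x i‖ ^ 2) := by
        rw [Real.norm_eq_abs, sq_abs, Real.sqrt_sq_eq_abs]
    _ ≤ Real.sqrt (∑ j, ‖x j‖ ^ 2) := by
        apply Real.sqrt_le_sqrt
        exact Finset.single_le_sum (f := fun j => ‖x j‖ ^ 2)
          (fun j _ => sq_nonneg _) (Finset.mem_univ i)
    _ = ‖x‖ := by rw [EuclideanSpace.norm_eq]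

private lemma integral_inner_noise {p : ℕ} {Ω : Type*} [inst : MeasurableSpace Ω]
    (μ : Measure Ω) [IsProbabilityMeasure μ]
    (X N : Ω → EuclideanSpace ℝ (Fin p)) (G : EuclideanSpace ℝ (Fin p) → EuclideanSpace ℝ (Fin p))
    (hG : Continuous G) (hX : Measurable X) (hN : Measurable N) (hNint : Integrable N μ)
    (hG2 : Integrable (fun ω => ‖G (X ω)‖ ^ 2) μ)
    (hN2 : Integrable (fun ω => ‖N ω‖ ^ 2) μ)
    (hcond : μ[N | MeasurableSpace.comap X inferInstance] =ᵐ[μ] 0) :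
    ∫ ω, ⟪G (X ω), N ω⟫ ∂μ = 0 := by
  have hm : MeasurableSpace.comap X inferInstance ≤ inst := hX.comap_le
  haveI : SigmaFinite (μ.trim hm) := inferInstance
  have hXm : Measurable[MeasurableSpace.comap X inferInstance] X :=
    Measurable.of_comap_le le_rfl
  -- per-coordinate facts
  have hmul_int : ∀ i : Fin p,
      Integrable (fun ω => G (X ω) i * N ω i) μ := by
    intro i
    refine Integrable.mono' ((hG2.add hN2).div_const 2) ?_ ?_
    · exact ((((EuclideanSpace.proj i).continuous.measurable.comp (hG.measurable.comp hX)).mul ((EuclideanSpace.proj i).continuous.measurable.comp hN))).aestronglyMeasurable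
    · filter_upwards with ω
      have h1 := coord_abs_le_norm (G (X ω)) i
      have h2 := coord_abs_le_norm (N ω) i
      have : ‖G (X ω) i * N ω i‖ = |G (X ω) i| * |N ω i| := by
        rw [Real.norm_eq_abs, abs_mul]
      rw [this]
      simp only [Pi.add_apply]
      have hnn2 : (0:ℝ) ≤ |N ω i| := abs_nonneg _
      nlinarith [mul_le_mul h1 h2 hnn2 (norm_nonneg (G (X ω))),
        sq_nonneg (‖G (X ω)‖ - ‖N ω‖)]
  have hint_i : ∀ i : Fin p, ∫ ω, G (X ω) i * N ω i ∂μ = 0 := by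
    intro i
    have hξi_int : Integrable (fun ω => N ω i) μ :=
      (EuclideanSpace.proj i : EuclideanSpace ℝ (Fin p) →L[ℝ] ℝ).integrable_comp hNint
    -- conditional expectation of coordinate is zero
    have hcondi : (0 : Ω → ℝ) =ᵐ[μ] μ[fun ω => N ω i|MeasurableSpace.comap X inferInstance] := by
      refine ae_eq_condExp_of_forall_setIntegral_eq hm hξi_int
        (fun s _ _ => integrableOn_zero) (fun s hs hμs => ?_) ?_
      · have h0 : ∫ x in s, N x ∂μ = 0 := by
          calc ∫ x in s, N x ∂μ = ∫ x in s, (μ[N|MeasurableSpace.comap X inferInstance]) x ∂μ :=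
                (setIntegral_condExp hm hNint hs).symm
            _ = ∫ x in s, (0 : EuclideanSpace ℝ (Fin p)) ∂μ :=
                integral_congr_ae (ae_restrict_of_ae hcond)
            _ = 0 := by simp
        have hLHS := ((EuclideanSpace.proj i : EuclideanSpace ℝ (Fin p) →L[ℝ] ℝ).integral_comp_comm
          hNint.integrableOn (μ := μ.restrict s))
        simp only [PiLp.proj_apply] at hLHS
        simp [hLHS, h0]
      · exact stronglyMeasurable_zero.aestronglyMeasurable
    have hgi_sm : StronglyMeasurable[MeasurableSpace.comap X inferInstance] (fun ω => G (X ω) i) := by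
      exact (((EuclideanSpace.proj i).continuous.measurable.comp hG.measurable).comp hXm).stronglyMeasurable
    have hpull := condExp_mul_of_stronglyMeasurable_left (μ := μ) hgi_sm
      (by exact hmul_int i) hξi_int
    have hzero : μ[(fun ω => G (X ω) i) * (fun ω => N ω i)|MeasurableSpace.comap X inferInstance] =ᵐ[μ] 0 := by
      refine hpull.trans ?_
      filter_upwards [hcondi.symm] with ω hω
      simp [hω]
    calc ∫ ω, G (X ω) i * N ω i ∂μ
        = ∫ ω, ((fun ω => G (X ω) i) * (fun ω => N ω i)) ω ∂μ := by rfl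
      _ = ∫ ω, (μ[(fun ω => G (X ω) i) * (fun ω => N ω i)|MeasurableSpace.comap X inferInstance]) ω ∂μ :=
          (integral_condExp hm).symm
      _ = ∫ ω, (0:ℝ) ∂μ := integral_congr_ae hzero
      _ = 0 := by simp
  calc ∫ ω, ⟪G (X ω), N ω⟫ ∂μ
      = ∫ ω, ∑ i, G (X ω) i * N ω i ∂μ := by
        refine integral_congr_ae (Filter.Eventually.of_forall fun ω => ?_)
        simp [PiLp.inner_apply, RCLike.inner_apply, conj_trivial, mul_comm]
    _ = ∑ i, ∫ ω, G (X ω) i * N ω i ∂μ :=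
        integral_finset_sum _ (fun i _ => hmul_int i)
    _ = 0 := by simp [hint_i]

private lemma integral_le_of_condexp_le {Ω : Type*} [inst : MeasurableSpace Ω] {p : ℕ}
    (μ : Measure Ω) [IsProbabilityMeasure μ]
    (X : Ω → EuclideanSpace ℝ (Fin p)) (f : Ω → ℝ) (c : ℝ) (hX : Measurable X)
    (hcond : ∀ᵐ ω ∂μ, (μ[f|MeasurableSpace.comap X inferInstance]) ω ≤ c) :
    ∫ ω, f ω ∂μ ≤ c := by
  have hm : MeasurableSpace.comap X inferInstance ≤ inst := hX.comap_le
  haveI : SigmaFinite (μ.trim hm) := inferInstance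
  calc ∫ ω, f ω ∂μ = ∫ ω, (μ[f|MeasurableSpace.comap X inferInstance]) ω ∂μ :=
        (integral_condExp hm).symm
    _ ≤ ∫ _ω, c ∂μ := integral_mono_ae integrable_condExp (integrable_const c) hcond
    _ = c := by simp

theorem sgd_convergence_noisy_meta
    (p : ℕ) (F : EuclideanSpace ℝ (Fin p) → ℝ) (L : ℝ) (hL : 0 < L)
    (hdiff : Differentiable ℝ F)
    (hlip : ∀ u v, ‖gradient F u - gradient F v‖ ≤ L * ‖u - v‖)
    (hbdd : BddBelow (Set.range F))
    {Ω : Type*} [MeasurableSpace Ω] (μ : Measure Ω) [IsProbabilityMeasure μ]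
    (Θ ξ : ℕ → Ω → EuclideanSpace ℝ (Fin p))
    (η β σhat : ℝ) (hη0 : 0 ≤ η) (hη1 : η < 1) (hβ0 : 0 < β) (hβL : β ≤ 1 / L)
    (hβstep : (1 - η) * β ≤ 2 * (1 - η) * β - (1 - η) ^ 2 * L * β ^ 2)
    (hrec : ∀ t ω, Θ (t + 1) ω
      = Θ t ω - β • ((1 - η) • gradient F (Θ t ω) + ξ t ω))
    (hmeas : ∀ t, Measurable (Θ t)) (hmeasξ : ∀ t, Measurable (ξ t))
    (hintξ : ∀ t, Integrable (ξ t) μ)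
    (hint2ξ : ∀ t, Integrable (fun ω => ‖ξ t ω‖ ^ 2) μ)
    (hcondmean : ∀ t,
      μ[ξ t | MeasurableSpace.comap (Θ t) inferInstance] =ᵐ[μ] 0)
    (hcondvar : ∀ t, ∀ᵐ ω ∂μ,
      (μ[fun ω' => ‖ξ t ω'‖ ^ 2 | MeasurableSpace.comap (Θ t) inferInstance]) ω
        ≤ σhat ^ 2)
    (hintgrad : ∀ t, Integrable (fun ω => ‖gradient F (Θ t ω)‖ ^ 2) μ)
    (Θ₁ : EuclideanSpace ℝ (Fin p)) (hΘ₁ : ∀ ω, Θ 1 ω = Θ₁)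
    (T : ℕ) (hT : 1 ≤ T) :
    ∃ t, 1 ≤ t ∧ t ≤ T ∧
      ∫ ω, ‖gradient F (Θ t ω)‖ ^ 2 ∂μ
        ≤ (2 * (F Θ₁ - sInf (Set.range F)) + T * L * σhat ^ 2 * β ^ 2)
            / ((1 - η) * β * T) := by
  classical
  have h1η : 0 < 1 - η := by linarith
  have hsInf_le : ∀ z, sInf (Set.range F) ≤ F z := fun z => csInf_le hbdd ⟨z, rfl⟩
  have hgradcont : Continuous (gradient F) := by
    have hlw : LipschitzWith (Real.toNNReal L) (gradient F) := by
      apply LipschitzWith.of_dist_le_mul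
      intro u v
      simpa [dist_eq_norm, Real.coe_toNNReal', max_eq_left hL.le] using hlip u v
    exact hlw.continuous
  set a : ℝ := (1 - η) * β - L * β ^ 2 * (1 - η) ^ 2 / 2 with ha_def
  set c : ℝ := L * β ^ 2 * (1 - η) - β with hc_def
  set D : ℝ := L * β ^ 2 / 2 * σhat ^ 2 with hD_def
  have hpt : ∀ t ω, F (Θ (t + 1) ω)
      ≤ F (Θ t ω) - a * ‖gradient F (Θ t ω)‖ ^ 2
        + c * ⟪gradient F (Θ t ω), ξ t ω⟫ + L * β ^ 2 / 2 * ‖ξ t ω‖ ^ 2 := by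
    intro t ω
    have hd := descent_lemma F L hdiff hlip (Θ t ω) (Θ (t + 1) ω)
    have hΔ : Θ (t + 1) ω - Θ t ω
        = -(β • ((1 - η) • gradient F (Θ t ω) + ξ t ω)) := by
      rw [hrec t ω]; abel
    rw [hΔ] at hd
    have hexp := expand_aux β (1 - η) L (gradient F (Θ t ω)) (ξ t ω)
    rw [ha_def, hc_def]
    linarith [hd, hexp]
  have hip_int : ∀ t, Integrable (fun ω => ⟪gradient F (Θ t ω), ξ t ω⟫) μ := by
    intro t
    refine Integrable.mono' (((hintgrad t).add (hint2ξ t)).div_const 2) ?_ ?_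
    · exact (((hgradcont.measurable.comp (hmeas t)).inner (hmeasξ t))).aestronglyMeasurable
    · filter_upwards with ω
      have h1 := abs_real_inner_le_norm (gradient F (Θ t ω)) (ξ t ω)
      simp only [Pi.add_apply, Real.norm_eq_abs]
      nlinarith [sq_nonneg (‖gradient F (Θ t ω)‖ - ‖ξ t ω‖), norm_nonneg (gradient F (Θ t ω)),
        norm_nonneg (ξ t ω)]
  have hstep : ∀ t, Integrable (fun ω => F (Θ t ω)) μ →
      Integrable (fun ω => F (Θ (t + 1) ω)) μ ∧
      ∫ ω, F (Θ (t + 1) ω) ∂μ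
        ≤ ∫ ω, F (Θ t ω) ∂μ - a * ∫ ω, ‖gradient F (Θ t ω)‖ ^ 2 ∂μ + D := by
    intro t hFt
    set R : Ω → ℝ := fun ω => F (Θ t ω) - a * ‖gradient F (Θ t ω)‖ ^ 2
        + c * ⟪gradient F (Θ t ω), ξ t ω⟫ + L * β ^ 2 / 2 * ‖ξ t ω‖ ^ 2 with hR_def
    have hRint : Integrable R μ :=
      ((hFt.sub ((hintgrad t).const_mul a)).add ((hip_int t).const_mul c)).add
        ((hint2ξ t).const_mul (L * β ^ 2 / 2))
    have hFt1 : Integrable (fun ω => F (Θ (t + 1) ω)) μ := by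
      refine Integrable.mono' (hRint.abs.add (integrable_const |sInf (Set.range F)|)) ?_ ?_
      · exact (hdiff.continuous.measurable.comp (hmeas (t + 1))).aestronglyMeasurable
      · filter_upwards with ω
        have hub := hpt t ω
        have hlb := hsInf_le (Θ (t + 1) ω)
        rw [Real.norm_eq_abs, abs_le]
        have h3 := neg_abs_le (sInf (Set.range F))
        have h4 := abs_nonneg (R ω)
        have h5 := le_abs_self (R ω)
        have h6 := abs_nonneg (sInf (Set.range F))
        constructor
        · simp only [Pi.add_apply, hR_def, Pi.abs_apply]
          simp only [hR_def, Pi.abs_apply] at h4 h5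
          linarith
        · simp only [Pi.add_apply, hR_def, Pi.abs_apply]
          simp only [hR_def, Pi.abs_apply] at h4 h5
          linarith
    refine ⟨hFt1, ?_⟩
    have hle : ∫ ω, F (Θ (t + 1) ω) ∂μ ≤ ∫ ω, R ω ∂μ :=
      integral_mono hFt1 hRint (fun ω => hpt t ω)
    have hRval : ∫ ω, R ω ∂μ
        = ∫ ω, F (Θ t ω) ∂μ - a * ∫ ω, ‖gradient F (Θ t ω)‖ ^ 2 ∂μ
          + c * ∫ ω, ⟪gradient F (Θ t ω), ξ t ω⟫ ∂μ
          + L * β ^ 2 / 2 * ∫ ω, ‖ξ t ω‖ ^ 2 ∂μ := by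
      rw [hR_def]
      have i1 : Integrable (fun ω => F (Θ t ω) - a * ‖gradient F (Θ t ω)‖ ^ 2) μ :=
        hFt.sub ((hintgrad t).const_mul a)
      have i2 : Integrable (fun ω => F (Θ t ω) - a * ‖gradient F (Θ t ω)‖ ^ 2
          + c * ⟪gradient F (Θ t ω), ξ t ω⟫) μ := i1.add ((hip_int t).const_mul c)
      rw [integral_add i2 ((hint2ξ t).const_mul (L * β ^ 2 / 2)),
        integral_add i1 ((hip_int t).const_mul c),
        integral_sub hFt ((hintgrad t).const_mul a),
        integral_const_mul, integral_const_mul, integral_const_mul]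
    have hip0 : ∫ ω, ⟪gradient F (Θ t ω), ξ t ω⟫ ∂μ = 0 :=
      integral_inner_noise μ (Θ t) (ξ t) (gradient F) hgradcont (hmeas t) (hmeasξ t)
        (hintξ t) (hintgrad t) (hint2ξ t) (hcondmean t)
    have hξ2 : ∫ ω, ‖ξ t ω‖ ^ 2 ∂μ ≤ σhat ^ 2 :=
      integral_le_of_condexp_le μ (Θ t) _ _ (hmeas t) (hcondvar t)
    have hcoef : (0:ℝ) ≤ L * β ^ 2 / 2 := by positivity
    rw [hRval, hip0, mul_zero, add_zero] at hle
    have hmm := mul_le_mul_of_nonneg_left hξ2 hcoef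
    rw [hD_def]
    linarith
  have hind : ∀ n : ℕ, Integrable (fun ω => F (Θ (n + 1) ω)) μ ∧
      ∫ ω, F (Θ (n + 1) ω) ∂μ
        + a * ∑ t ∈ Finset.Icc 1 n, ∫ ω, ‖gradient F (Θ t ω)‖ ^ 2 ∂μ
        ≤ F Θ₁ + n * D := by
    intro n
    induction n with
    | zero =>
      have hconst : (fun ω => F (Θ 1 ω)) = fun _ => F Θ₁ := funext fun ω => by rw [hΘ₁]
      constructor
      · rw [hconst]; exact integrable_const _
      · rw [hconst]
        simp [Finset.Icc_eq_empty_of_lt (Nat.zero_lt_one)]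
    | succ n ih =>
      obtain ⟨ih1, ih2⟩ := ih
      obtain ⟨h1, h2⟩ := hstep (n + 1) ih1
      refine ⟨h1, ?_⟩
      have hsum : ∑ t ∈ Finset.Icc 1 (n + 1), ∫ ω, ‖gradient F (Θ t ω)‖ ^ 2 ∂μ
          = ∫ ω, ‖gradient F (Θ (n + 1) ω)‖ ^ 2 ∂μ
            + ∑ t ∈ Finset.Icc 1 n, ∫ ω, ‖gradient F (Θ t ω)‖ ^ 2 ∂μ := by
        rw [Finset.sum_Icc_succ_top (by omega : 1 ≤ n + 1)]
        ring
      rw [hsum]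
      push_cast
      push_cast at ih2
      linarith
  obtain ⟨hintT, hkey⟩ := hind T
  have hlbT : sInf (Set.range F) ≤ ∫ ω, F (Θ (T + 1) ω) ∂μ := by
    calc sInf (Set.range F) = ∫ _ω, sInf (Set.range F) ∂μ := by simp
      _ ≤ ∫ ω, F (Θ (T + 1) ω) ∂μ :=
        integral_mono (integrable_const _) hintT (fun ω => hsInf_le _)
  have hInonneg : ∀ t : ℕ, 0 ≤ ∫ ω, ‖gradient F (Θ t ω)‖ ^ 2 ∂μ :=
    fun t => integral_nonneg fun ω => sq_nonneg _
  obtain ⟨t₀, ht₀mem, ht₀min⟩ := Finset.exists_min_image (Finset.Icc 1 T)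
    (fun t => ∫ ω, ‖gradient F (Θ t ω)‖ ^ 2 ∂μ) ⟨1, Finset.mem_Icc.mpr ⟨le_rfl, hT⟩⟩
  obtain ⟨ht₀1, ht₀T⟩ := Finset.mem_Icc.mp ht₀mem
  refine ⟨t₀, ht₀1, ht₀T, ?_⟩
  set m : ℝ := ∫ ω, ‖gradient F (Θ t₀ ω)‖ ^ 2 ∂μ with hm_def
  set S : ℝ := ∑ t ∈ Finset.Icc 1 T, ∫ ω, ‖gradient F (Θ t ω)‖ ^ 2 ∂μ with hS_def
  have hTm_le_S : (T : ℝ) * m ≤ S := by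
    have hss : ∑ _t ∈ Finset.Icc 1 T, m ≤ S := Finset.sum_le_sum fun t ht => ht₀min t ht
    calc (T : ℝ) * m = ∑ _t ∈ Finset.Icc 1 T, m := by
          rw [Finset.sum_const, Nat.card_Icc, nsmul_eq_mul]
          norm_num
      _ ≤ S := hss
  have ha_ge : (1 - η) * β / 2 ≤ a := by
    have hrr : (1 - η) ^ 2 * L * β ^ 2 = L * β ^ 2 * (1 - η) ^ 2 := by ring
    rw [ha_def]; linarith [hβstep, hrr]
  have ha_pos : 0 < (1 - η) * β / 2 := by positivity
  have hS_nonneg : 0 ≤ S := Finset.sum_nonneg fun t _ => hInonneg t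
  have hm_nonneg : 0 ≤ m := hInonneg t₀
  have hmain : (1 - η) * β / 2 * ((T : ℝ) * m) ≤ F Θ₁ - sInf (Set.range F) + T * D := by
    have h1 : a * S ≤ F Θ₁ - sInf (Set.range F) + T * D := by linarith
    have h2 : a * ((T : ℝ) * m) ≤ a * S :=
      mul_le_mul_of_nonneg_left hTm_le_S (le_trans ha_pos.le ha_ge)
    have h3 : (1 - η) * β / 2 * ((T : ℝ) * m) ≤ a * ((T : ℝ) * m) :=
      mul_le_mul_of_nonneg_right ha_ge (by positivity)
    exact le_trans h3 (le_trans h2 h1)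
  have hTpos : (0:ℝ) < (T : ℝ) := by exact_mod_cast hT
  have hdpos : 0 < (1 - η) * β * (T : ℝ) := by positivity
  rw [le_div_iff₀ hdpos]
  have e1 : m * ((1 - η) * β * (T : ℝ)) = 2 * ((1 - η) * β / 2 * ((T : ℝ) * m)) := by ring
  have e2 : (T : ℝ) * L * σhat ^ 2 * β ^ 2 = 2 * ((T : ℝ) * D) := by rw [hD_def]; ring
  linarith [hmain]
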